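/- (Exit density as boundary probability flux, Eq. (2.7) of the paper for the 1-ball.) For every R > 0 and t > 0, the function x ↦ f₁(x, t; 0) is differentiable at x = R and at x = −R, and the total boundary outflux equals the exit-time density: f₁^exit(t) = (1/2) · ∂f₁/∂x(−R, t; 0) − (1/2) · ∂f₁/∂x(R, t; 0). -/

import Mathlib

open Real Filter Topology MeasureTheory

/-- Dirichlet heat kernel of the interval `(-R, R)` with source `x'`. -/
noncomputable def f₁ (R x' x t : ℝ) : ℝ :=
  ∑' k : ℕ, (1 / R) * Real.sin (((k : ℝ) + 1) * π * (x' + R) / (2 * R)) *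
    Real.sin (((k : ℝ) + 1) * π * (x + R) / (2 * R)) *
    Real.exp (-((((k : ℝ) + 1) * π) ^ 2 / (4 * R ^ 2)) * t / 2)

/-- Exit-time density of a standard Brownian motion started at the center of
`(-R, R)` and killed at `±R`. -/
noncomputable def f₁exit (R t : ℝ) : ℝ :=
  (π / (2 * R ^ 2)) * ∑' k : ℕ, (-1 : ℝ) ^ k * (2 * (k : ℝ) + 1) *
    Real.exp (-((2 * (k : ℝ) + 1) ^ 2 * π ^ 2 * t) / (8 * R ^ 2))

private lemma summable_aux {r : ℝ} (h0 : 0 ≤ r) (h1 : r < 1) :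
    Summable (fun k : ℕ => ((k : ℝ) + 1) * r ^ (k + 1)) := by
  have h : Summable (fun n : ℕ => (n : ℝ) ^ 1 * r ^ n) :=
    summable_pow_mul_geometric_of_norm_lt_one 1 (by rwa [Real.norm_eq_abs, abs_of_nonneg h0])
  have h2 := (summable_nat_add_iff 1).2 h
  simpa using h2

/-- coefficient -/
private noncomputable def fA (R : ℝ) (k : ℕ) : ℝ :=
  Real.sin (((k : ℝ) + 1) * π * (0 + R) / (2 * R))

private noncomputable def fE (R t : ℝ) (k : ℕ) : ℝ :=
  Real.exp (-((((k : ℝ) + 1) * π) ^ 2 / (4 * R ^ 2)) * t / 2)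

private noncomputable def fF (R t : ℝ) (k : ℕ) (x : ℝ) : ℝ :=
  (1 / R) * fA R k * Real.sin (((k : ℝ) + 1) * π * (x + R) / (2 * R)) * fE R t k

private noncomputable def fF' (R t : ℝ) (k : ℕ) (x : ℝ) : ℝ :=
  (1 / R) * fA R k *
    (Real.cos (((k : ℝ) + 1) * π * (x + R) / (2 * R)) * (((k : ℝ) + 1) * π / (2 * R))) * fE R t k


/-- The exit density is the total boundary probability outflux: `x ↦ f₁(x, t; 0)` is
differentiable at `x = ±R` and
`f₁^exit(t) = (1/2) ∂f₁/∂x(-R, t; 0) - (1/2) ∂f₁/∂x(R, t; 0)`. -/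
theorem exit_density_eq_boundary_flux (R : ℝ) (hR : 0 < R) (t : ℝ) (ht : 0 < t) :
    DifferentiableAt ℝ (fun x => f₁ R 0 x t) R ∧
    DifferentiableAt ℝ (fun x => f₁ R 0 x t) (-R) ∧
    f₁exit R t =
      (1 / 2) * deriv (fun x => f₁ R 0 x t) (-R) -
        (1 / 2) * deriv (fun x => f₁ R 0 x t) R := by
  have hR0 : (R : ℝ) ≠ 0 := ne_of_gt hR
  have hπ := Real.pi_pos
  set c : ℝ := π ^ 2 * t / (8 * R ^ 2) with hc
  have hcpos : 0 < c := by positivity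
  set r : ℝ := Real.exp (-c) with hrdef
  have hr0 : 0 ≤ r := le_of_lt (Real.exp_pos _)
  have hr1 : r < 1 := by
    rw [hrdef, Real.exp_lt_one_iff]; linarith
  have hEeq : ∀ k : ℕ, fE R t k = Real.exp (-(((k : ℝ) + 1) ^ 2 * c)) := by
    intro k
    rw [fE, hc]
    congr 1
    field_simp
    ring
  have hEpos : ∀ k, 0 < fE R t k := fun k => Real.exp_pos _
  have hEle : ∀ k : ℕ, fE R t k ≤ r ^ (k + 1) := by
    intro k
    have hk0 : (0:ℝ) ≤ (k : ℝ) := Nat.cast_nonneg k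
    have h1 : ((k : ℝ) + 1) * c ≤ ((k : ℝ) + 1) ^ 2 * c := by
      have hd : ((k : ℝ) + 1) ^ 2 * c - ((k : ℝ) + 1) * c = ((k : ℝ) * ((k : ℝ) + 1)) * c := by
        ring
      nlinarith [mul_nonneg (mul_nonneg hk0 (by linarith : (0:ℝ) ≤ (k : ℝ) + 1)) hcpos.le]
    have h2 : r ^ (k + 1) = Real.exp (-(((k : ℝ) + 1) * c)) := by
      rw [hrdef, ← Real.exp_nat_mul]
      congr 1
      push_cast
      ring
    rw [hEeq, h2]
    exact Real.exp_le_exp.2 (by linarith)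
  have hAbd : ∀ k, |fA R k| ≤ 1 := fun k => Real.abs_sin_le_one _
  set u : ℕ → ℝ := fun k => (π / (2 * R ^ 2)) * (((k : ℝ) + 1) * r ^ (k + 1)) with hu_def
  have hu : Summable u := (summable_aux hr0 hr1).mul_left _
  have hbound : ∀ (k : ℕ) (x : ℝ), ‖fF' R t k x‖ ≤ u k := by
    intro k x
    have hd : 0 ≤ ((k : ℝ) + 1) * π / (2 * R) := by positivity
    have h1 : ‖fF' R t k x‖ = (1 / R) * |fA R k| *
        (|Real.cos (((k : ℝ) + 1) * π * (x + R) / (2 * R))| *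
        (((k : ℝ) + 1) * π / (2 * R))) * fE R t k := by
      rw [fF', Real.norm_eq_abs, abs_mul, abs_mul, abs_mul, abs_mul,
        abs_of_pos (by positivity : (0:ℝ) < 1 / R), abs_of_nonneg hd,
        abs_of_pos (hEpos k)]
    rw [h1]
    calc (1 / R) * |fA R k| * (|Real.cos (((k : ℝ) + 1) * π * (x + R) / (2 * R))| *
        (((k : ℝ) + 1) * π / (2 * R))) * fE R t k
        ≤ (1 / R) * 1 * (1 * (((k : ℝ) + 1) * π / (2 * R))) * (r ^ (k + 1)) := by
          gcongr <;> first
            | exact hAbd k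
            | exact Real.abs_cos_le_one _
            | exact hEle k
            | exact (hEpos k).le
            | positivity
      _ = u k := by rw [hu_def]; field_simp
  have hderiv : ∀ (k : ℕ) (y : ℝ), HasDerivAt (fF R t k) (fF' R t k y) y := by
    intro k y
    have hinner : HasDerivAt (fun x : ℝ => ((k : ℝ) + 1) * π * (x + R) / (2 * R))
        (((k : ℝ) + 1) * π / (2 * R)) y := by
      have h := (((hasDerivAt_id y).add_const R).const_mul (((k : ℝ) + 1) * π)).div_const (2 * R)
      simpa using h
    exact ((hinner.sin.const_mul ((1 / R) * fA R k)).mul_const (fE R t k))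
  have hsum0 : Summable fun k => fF R t k 0 := by
    apply Summable.of_norm_bounded (g := fun k => (1 / R) * r ^ (k + 1))
    · exact (((summable_geometric_of_lt_one hr0 hr1).mul_left r).mul_left (1 / R)).congr
        (fun k => by rw [pow_succ]; ring)
    · intro k
      have h1 : ‖fF R t k 0‖ = (1 / R) * |fA R k| *
          |Real.sin (((k : ℝ) + 1) * π * ((0:ℝ) + R) / (2 * R))| * fE R t k := by
        rw [fF, Real.norm_eq_abs, abs_mul, abs_mul, abs_mul,
          abs_of_pos (by positivity : (0:ℝ) < 1 / R), abs_of_pos (hEpos k)]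
      rw [h1]
      calc (1 / R) * |fA R k| * |Real.sin (((k : ℝ) + 1) * π * ((0:ℝ) + R) / (2 * R))| * fE R t k
          ≤ (1 / R) * 1 * 1 * r ^ (k + 1) := by
            gcongr <;> first
              | exact hAbd k
              | exact Real.abs_sin_le_one _
              | exact hEle k
              | exact (hEpos k).le
              | positivity
        _ = (1 / R) * r ^ (k + 1) := by ring
  have hD : ∀ y : ℝ, HasDerivAt (fun x => ∑' k, fF R t k x) (∑' k, fF' R t k y) y :=
    hasDerivAt_tsum hu hderiv hbound hsum0
  have hfun : (fun x => f₁ R 0 x t) = fun x => ∑' k, fF R t k x := rfl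
  rw [hfun]
  refine ⟨(hD R).differentiableAt, (hD (-R)).differentiableAt, ?_⟩
  rw [(hD R).deriv, (hD (-R)).deriv]
  -- per-term trigonometric facts
  have hAodd : ∀ m : ℕ, fA R (2 * m + 1) = 0 := by
    intro m
    have harg : (((2 * m + 1 : ℕ) : ℝ) + 1) * π * (0 + R) / (2 * R) = ((m + 1 : ℕ) : ℝ) * π := by
      push_cast
      field_simp
      ring
    rw [fA, harg, Real.sin_nat_mul_pi]
  have hAeven : ∀ m : ℕ, fA R (2 * m) = (-1 : ℝ) ^ m := by
    intro m
    have harg : (((2 * m : ℕ) : ℝ) + 1) * π * (0 + R) / (2 * R) = (m : ℝ) * π + π / 2 := by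
      push_cast
      field_simp
      ring
    rw [fA, harg, Real.sin_add_pi_div_two]
    simpa using Real.cos_nat_mul_pi_sub 0 m
  have hcosm : ∀ k : ℕ, Real.cos (((k : ℝ) + 1) * π * (-R + R) / (2 * R)) = 1 := by
    intro k
    simp
  have hcosR : ∀ k : ℕ, Real.cos (((k : ℝ) + 1) * π * (R + R) / (2 * R)) = (-1 : ℝ) ^ (k + 1) := by
    intro k
    have harg : ((k : ℝ) + 1) * π * (R + R) / (2 * R) = ((k + 1 : ℕ) : ℝ) * π := by
      push_cast
      field_simp
      ring
    rw [harg]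
    simpa using Real.cos_nat_mul_pi_sub 0 (k + 1)
  have hterm : ∀ m : ℕ,
      ((1:ℝ) / 2 * fF' R t (2 * m) (-R) - 1 / 2 * fF' R t (2 * m) R)
        = (π / (2 * R ^ 2)) * ((-1 : ℝ) ^ m * (2 * (m : ℝ) + 1) *
            Real.exp (-((2 * (m : ℝ) + 1) ^ 2 * π ^ 2 * t) / (8 * R ^ 2))) := by
    intro m
    have hexp : fE R t (2 * m) =
        Real.exp (-((2 * (m : ℝ) + 1) ^ 2 * π ^ 2 * t) / (8 * R ^ 2)) := by
      rw [fE]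
      congr 1
      push_cast
      field_simp
      ring
    have hneg : ((-1 : ℝ)) ^ (2 * m + 1) = -1 := Odd.neg_one_pow ⟨m, by ring⟩
    simp only [fF', hAeven m, hcosm (2 * m), hcosR (2 * m), hexp, hneg]
    push_cast
    ring
  have hSmL : Summable fun k => fF' R t k (-R) :=
    Summable.of_norm_bounded hu fun k => hbound k (-R)
  have hSmR : Summable fun k => fF' R t k R :=
    Summable.of_norm_bounded hu fun k => hbound k R
  rw [← tsum_mul_left, ← tsum_mul_left, ← Summable.tsum_sub (hSmL.mul_left _) (hSmR.mul_left _)]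
  have hinj : Function.Injective (fun m : ℕ => 2 * m) := fun a b hab => by dsimp at hab; omega
  have hsupp : Function.support
      (fun k : ℕ => (1:ℝ) / 2 * fF' R t k (-R) - 1 / 2 * fF' R t k R) ⊆
      Set.range (fun m : ℕ => 2 * m) := by
    intro k hk
    rcases Nat.even_or_odd k with ⟨m, hm⟩ | ⟨m, hm⟩
    · exact ⟨m, by dsimp; omega⟩
    · exfalso
      apply hk
      subst hm
      simp [fF', hAodd m]
  have key := Function.Injective.tsum_eq
    (f := fun k : ℕ => (1:ℝ) / 2 * fF' R t k (-R) - 1 / 2 * fF' R t k R) hinj hsupp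
  have goal_eq : (∑' m : ℕ, ((1:ℝ) / 2 * fF' R t (2 * m) (-R) - 1 / 2 * fF' R t (2 * m) R))
      = f₁exit R t := by
    rw [tsum_congr hterm, tsum_mul_left, f₁exit]
  exact goal_eq.symm.trans key
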